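/- Uhlmann's theorem: let ρ, σ be density operators on a finite-dimensional space X, with purifications |ψ_ρ⟩, |ψ_σ⟩ on X ⊗ Y. Then there exists a unitary U acting only on Y such that |⟨ψ_σ|(I_X ⊗ U)|ψ_ρ⟩|² = F(ρ, σ). -/

import Mathlib

open Matrix
open scoped ComplexOrder Kronecker
noncomputable section

/-- Square root of a matrix: the PSD square root if the matrix is PSD, else 0. -/
noncomputable def matSqrt {n : Type*} [Fintype n] [DecidableEq n]
    (A : Matrix n n ℂ) : Matrix n n ℂ :=
  open scoped Classical in
  if h : A.PosSemidef then
    (h.1.eigenvectorUnitary : Matrix n n ℂ) * diagonal ((↑) ∘ (√·) ∘ h.1.eigenvalues) *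
      (star (h.1.eigenvectorUnitary : Matrix n n ℂ))
  else 0

/-- Trace norm ‖A‖₁ = Tr √(AᴴA). -/
noncomputable def traceNorm {n : Type*} [Fintype n] [DecidableEq n]
    (A : Matrix n n ℂ) : ℝ :=
  (Matrix.trace (matSqrt (Aᴴ * A))).re

/-- Trace distance TD(ρ,σ) = (1/2)‖ρ−σ‖₁. -/
noncomputable def TD {n : Type*} [Fintype n] [DecidableEq n]
    (ρ σ : Matrix n n ℂ) : ℝ :=
  traceNorm (ρ - σ) / 2

/-- Uhlmann fidelity F(ρ,σ) = (Tr √(√σ ρ √σ))². -/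
noncomputable def fidelity {n : Type*} [Fintype n] [DecidableEq n]
    (ρ σ : Matrix n n ℂ) : ℝ :=
  ((Matrix.trace (matSqrt (matSqrt σ * ρ * matSqrt σ))).re) ^ 2

/-- ρ is a density matrix: positive semidefinite with unit trace. -/
def IsDensity {n : Type*} [Fintype n] [DecidableEq n]
    (ρ : Matrix n n ℂ) : Prop :=
  ρ.PosSemidef ∧ ρ.trace = 1

/-- The reduced state on X of a pure state on X ⊗ Y (Y traced out). -/
noncomputable def redX {X Y : Type*} [Fintype X] [Fintype Y]
    (ψ : X × Y → ℂ) : Matrix X X ℂ :=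
  Matrix.of fun x x' => ∑ y, ψ (x, y) * (starRingEnd ℂ) (ψ (x', y))

section UhlmannAuxSect

lemma matSqrt_of_psd {n : Type*} [Fintype n] [DecidableEq n]
    {A : Matrix n n ℂ} (h : A.PosSemidef) : matSqrt A =
    (h.1.eigenvectorUnitary : Matrix n n ℂ) * diagonal ((↑) ∘ (√·) ∘ h.1.eigenvalues) *
      (star (h.1.eigenvectorUnitary : Matrix n n ℂ)) := dif_pos h

lemma matSqrt_psd {n : Type*} [Fintype n] [DecidableEq n]
    {A : Matrix n n ℂ} (h : A.PosSemidef) : (matSqrt A).PosSemidef := by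
  rw [matSqrt_of_psd h]
  exact (posSemidef_diagonal_iff.mpr fun i => Complex.zero_le_real.mpr (Real.sqrt_nonneg _)
    ).mul_mul_conjTranspose_same _

lemma matSqrt_herm {n : Type*} [Fintype n] [DecidableEq n]
    {A : Matrix n n ℂ} (h : A.PosSemidef) : (matSqrt A)ᴴ = matSqrt A :=
  (matSqrt_psd h).1

lemma matSqrt_mul_self {n : Type*} [Fintype n] [DecidableEq n]
    {A : Matrix n n ℂ} (h : A.PosSemidef) : matSqrt A * matSqrt A = A := by
  rw [matSqrt_of_psd h]
  have hW : star (h.1.eigenvectorUnitary : Matrix n n ℂ) *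
      (h.1.eigenvectorUnitary : Matrix n n ℂ) = 1 := Unitary.coe_star_mul_self _
  have hs := h.1.spectral_theorem
  rw [Unitary.conjStarAlgAut_apply] at hs
  have hd : diagonal (((↑) : ℝ → ℂ) ∘ (√·) ∘ h.1.eigenvalues) *
      diagonal (((↑) : ℝ → ℂ) ∘ (√·) ∘ h.1.eigenvalues) =
      diagonal (RCLike.ofReal ∘ h.1.eigenvalues) := by
    rw [diagonal_mul_diagonal]
    congr 1
    funext i
    simp only [Function.comp_apply]
    rw [← Complex.ofReal_mul, Real.mul_self_sqrt (h.eigenvalues_nonneg i)]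
    rfl
  conv_rhs => rw [hs]
  simp only [Matrix.mul_assoc]
  rw [← Matrix.mul_assoc _ (h.1.eigenvectorUnitary : Matrix n n ℂ), hW, Matrix.one_mul,
    ← Matrix.mul_assoc (diagonal _) (diagonal _), hd]

variable {X Y : Type*} [Fintype X] [DecidableEq X] [Fintype Y] [DecidableEq Y]

/-- The rectangular "identity" matrix induced by an injection. -/
def embMat (ι : X ↪ Y) : Matrix X Y ℂ := of fun x y => if ι x = y then 1 else 0

omit [Fintype X] in
lemma embMat_mul_conjTranspose (ι : X ↪ Y) : embMat ι * (embMat ι)ᴴ = 1 := by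
  ext i j
  simp only [mul_apply, embMat, conjTranspose_apply, of_apply, one_apply]
  rw [Finset.sum_eq_single (ι i)]
  · simp [ι.injective.eq_iff, eq_comm]
  · intro b _ hb; simp [Ne.symm hb]
  · simp

set_option maxRecDepth 8000 in
/-- Key decomposition: any rectangular matrix `A` factors as `√(A Aᴴ)` times a
co-isometry of the special form `U * E * Vᴴ` with `U`, `V` unitary. -/
lemma exists_decomp (ι : X ↪ Y) (A : Matrix X Y ℂ) :
    ∃ (U : Matrix X X ℂ) (V : Matrix Y Y ℂ), Uᴴ * U = 1 ∧ Vᴴ * V = 1 ∧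
      A = matSqrt (A * Aᴴ) * (U * embMat ι * Vᴴ) := by
  classical
  have hρ : (A * Aᴴ).PosSemidef := posSemidef_self_mul_conjTranspose A
  have hH : (A * Aᴴ).IsHermitian := hρ.1
  set U : Matrix X X ℂ := (hH.eigenvectorUnitary : Matrix X X ℂ) with hU
  have hUu : Uᴴ * U = 1 := by
    simpa [hU, Matrix.star_eq_conjTranspose] using
      (Matrix.mem_unitaryGroup_iff').mp hH.eigenvectorUnitary.2
  have hUu' : U * Uᴴ = 1 := mul_eq_one_comm.mp hUu
  set lam := hH.eigenvalues with hlam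
  set C : Matrix Y X ℂ := Aᴴ * U with hCdef
  have hC : Cᴴ * C = diagonal (fun i => (lam i : ℂ)) := by
    have h1 : Cᴴ * C = Uᴴ * (A * Aᴴ) * U := by
      rw [hCdef, conjTranspose_mul, conjTranspose_conjTranspose]
      simp only [Matrix.mul_assoc]
    rw [h1]
    have h2 := hH.conjStarAlgAut_star_eigenvectorUnitary
    rw [Unitary.conjStarAlgAut_apply] at h2
    simp [Matrix.star_eq_conjTranspose, hU] at h2
    exact h2
  have hCe : ∀ i j, (∑ y, star (C y i) * C y j) = if i = j then (lam i : ℂ) else 0 := by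
    intro i j
    have := congrFun (congrFun hC i) j
    simpa [mul_apply, conjTranspose_apply, Matrix.diagonal_apply] using this
  have hCzero : ∀ i, lam i = 0 → ∀ y, C y i = 0 := by
    intro i hi y
    have h0 : ∑ y, Complex.normSq (C y i) = 0 := by
      have h := hCe i i
      rw [if_pos rfl, hi, Complex.ofReal_zero] at h
      have h2 : ((∑ y, Complex.normSq (C y i) : ℝ) : ℂ) = 0 := by
        rw [Complex.ofReal_sum, ← h]
        refine Finset.sum_congr rfl fun y _ => ?_
        rw [Complex.star_def, mul_comm, Complex.mul_conj]
      exact_mod_cast h2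
    have := (Finset.sum_eq_zero_iff_of_nonneg
      (fun y (_ : y ∈ Finset.univ) => Complex.normSq_nonneg (C y i))).mp h0 y (Finset.mem_univ y)
    exact Complex.normSq_eq_zero.mp this
  -- the normalized columns
  set w : X → EuclideanSpace ℂ Y := fun i => WithLp.toLp 2 (fun y => ((Real.sqrt (lam i) : ℂ))⁻¹ * C y i) with hw
  have hwinner : ∀ i j, lam i ≠ 0 → lam j ≠ 0 →
      (inner ℂ (w i) (w j) : ℂ) = if i = j then 1 else 0 := by
    intro i j hi hj
    have hipos : 0 < lam i := lt_of_le_of_ne (hρ.eigenvalues_nonneg i) (Ne.symm hi)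
    have hsum : (inner ℂ (w i) (w j) : ℂ) =
        ((Real.sqrt (lam i) : ℂ))⁻¹ * ((Real.sqrt (lam j) : ℂ))⁻¹ *
          (if i = j then (lam i : ℂ) else 0) := by
      rw [PiLp.inner_apply, ← hCe i j, Finset.mul_sum]
      refine Finset.sum_congr rfl fun y _ => ?_
      simp only [hw, WithLp.ofLp_toLp, RCLike.inner_apply, _root_.map_mul, map_inv₀, Complex.conj_ofReal,
        ← starRingEnd_apply]
      ring
    rw [hsum]
    by_cases hij : i = j
    · subst hij
      rw [if_pos rfl, if_pos rfl]
      have hr : (Real.sqrt (lam i))⁻¹ * (Real.sqrt (lam i))⁻¹ * lam i = 1 := by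
        rw [← mul_inv, Real.mul_self_sqrt hipos.le]
        field_simp
      exact_mod_cast congrArg (Complex.ofReal) hr
    · simp [hij]
  -- extend to an orthonormal basis
  set s : Set Y := ι '' {i | lam i ≠ 0} with hs
  set v : Y → EuclideanSpace ℂ Y :=
    fun y => if h : ∃ i, lam i ≠ 0 ∧ ι i = y then w h.choose else 0 with hv
  have hvs : ∀ i, lam i ≠ 0 → v (ι i) = w i := by
    intro i hi
    have hex : ∃ j, lam j ≠ 0 ∧ ι j = ι i := ⟨i, hi, rfl⟩
    rw [hv]
    simp only [dif_pos hex]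
    have : hex.choose = i := ι.injective hex.choose_spec.2
    rw [this]
  have hortho : Orthonormal ℂ (s.restrict v) := by
    rw [orthonormal_iff_ite]
    rintro ⟨y, hy⟩ ⟨y', hy'⟩
    obtain ⟨i, hi, rfl⟩ := id hy
    obtain ⟨j, hj, rfl⟩ := id hy'
    show inner ℂ (v (ι i)) (v (ι j)) = _
    rw [hvs i hi, hvs j hj, hwinner i j hi hj]
    by_cases hij : i = j
    · subst hij; simp
    · rw [if_neg hij, if_neg]
      intro h
      exact hij (ι.injective (congrArg Subtype.val h))
  obtain ⟨b, hb⟩ := hortho.exists_orthonormalBasis_extension_of_card_eq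
    (by simp [finrank_euclideanSpace])
  set V : Matrix Y Y ℂ := of fun y z => b z y with hV
  have hVu : Vᴴ * V = 1 := by
    ext z z'
    have h1 := (orthonormal_iff_ite (𝕜 := ℂ)).mp b.orthonormal z z'
    rw [PiLp.inner_apply] at h1
    simp only [mul_apply, conjTranspose_apply, hV, of_apply, one_apply]
    rw [← h1]
    refine Finset.sum_congr rfl fun y _ => ?_
    rw [RCLike.inner_apply, starRingEnd_apply]
    exact mul_comm _ _
  refine ⟨U, V, hUu, hVu, ?_⟩
  have hsqrt : matSqrt (A * Aᴴ) =
      U * diagonal ((↑) ∘ Real.sqrt ∘ lam) * Uᴴ := by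
    rw [matSqrt_of_psd hρ]
    rfl
  have key : Uᴴ * A = diagonal (((↑) : ℝ → ℂ) ∘ Real.sqrt ∘ lam) * (embMat ι * Vᴴ) := by
    have hCT : Uᴴ * A = Cᴴ := by
      rw [hCdef, conjTranspose_mul, conjTranspose_conjTranspose]
    rw [hCT]
    ext i y
    have hEV : (embMat ι * Vᴴ) i y = star (b (ι i) y) := by
      simp only [mul_apply, embMat, conjTranspose_apply, of_apply, hV]
      rw [Finset.sum_eq_single (ι i)]
      · simp
      · intro z _ hz; simp [Ne.symm hz]
      · simp
    rw [diagonal_mul, hEV]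
    simp only [conjTranspose_apply, Function.comp_apply]
    by_cases hi : lam i = 0
    · rw [hCzero i hi y, hi]
      simp
    · have hbw : b (ι i) = w i := by
        rw [hb (ι i) ⟨i, hi, rfl⟩, hvs i hi]
      have hsw : star (w i y) = ((Real.sqrt (lam i) : ℂ))⁻¹ * star (C y i) := by
        simp only [hw, WithLp.ofLp_toLp, star_mul', star_inv₀, Complex.star_def, Complex.conj_ofReal]
      have hne : Real.sqrt (lam i) ≠ 0 :=
        (Real.sqrt_pos.mpr (lt_of_le_of_ne (hρ.eigenvalues_nonneg i) (Ne.symm hi))).ne'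
      rw [hbw, hsw, ← mul_assoc, ← Complex.ofReal_inv, ← Complex.ofReal_mul,
        mul_inv_cancel₀ hne, Complex.ofReal_one, one_mul]
  calc A = U * (Uᴴ * A) := by rw [← Matrix.mul_assoc, hUu', Matrix.one_mul]
    _ = U * (diagonal (((↑) : ℝ → ℂ) ∘ Real.sqrt ∘ lam) * (embMat ι * Vᴴ)) := by rw [key]
    _ = matSqrt (A * Aᴴ) * (U * embMat ι * Vᴴ) := by
        rw [hsqrt]
        simp only [Matrix.mul_assoc]
        rw [← Matrix.mul_assoc Uᴴ U, hUu, Matrix.one_mul]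



lemma dot_kron (M : Matrix Y Y ℂ) (f g : X × Y → ℂ) :
    star g ⬝ᵥ ((1 : Matrix X X ℂ) ⊗ₖ M).mulVec f =
      trace ((of fun x y => g (x, y))ᴴ * (of fun x y => f (x, y)) * Mᵀ) := by
  calc star g ⬝ᵥ ((1 : Matrix X X ℂ) ⊗ₖ M).mulVec f
      = ∑ x, ∑ y, ∑ y', star (g (x, y)) * M y y' * f (x, y') := by
        simp only [dotProduct, Matrix.mulVec, kroneckerMap_apply, one_apply, Pi.star_apply,
          Fintype.sum_prod_type, ite_mul, one_mul, zero_mul, Finset.mul_sum, mul_ite, mul_zero]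
        refine Finset.sum_congr rfl fun x _ => Finset.sum_congr rfl fun y _ => ?_
        rw [Finset.sum_comm]
        refine Finset.sum_congr rfl fun y' _ => ?_
        rw [Finset.sum_ite_eq]
        simp [mul_assoc]
    _ = ∑ y, ∑ x, ∑ y', star (g (x, y)) * M y y' * f (x, y') := Finset.sum_comm
    _ = ∑ y, ∑ y', ∑ x, star (g (x, y)) * M y y' * f (x, y') :=
        Finset.sum_congr rfl fun y _ => Finset.sum_comm
    _ = trace ((of fun x y => g (x, y))ᴴ * (of fun x y => f (x, y)) * Mᵀ) := by
        simp only [trace, diag_apply, mul_apply, conjTranspose_apply, transpose_apply, of_apply,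
          Finset.sum_mul, Finset.mul_sum]
        refine Finset.sum_congr rfl fun y _ => Finset.sum_congr rfl fun y' _ =>
          Finset.sum_congr rfl fun x _ => ?_
        ring

end UhlmannAuxSect


lemma conjT_transpose {n m : Type*} (A : Matrix n m ℂ) : (Aᵀ)ᴴ = (Aᴴ)ᵀ := by
  ext i j
  simp

/-- Uhlmann's theorem: if |ψ_ρ⟩, |ψ_σ⟩ ∈ X ⊗ Y purify ρ and σ
(with dim Y ≥ dim X), there is a unitary U on Y with
|⟨ψ_σ|(I_X ⊗ U)|ψ_ρ⟩|² = F(ρ,σ). -/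
theorem uhlmann
    {X Y : Type*} [Fintype X] [DecidableEq X] [Fintype Y] [DecidableEq Y]
    (hdim : Fintype.card X ≤ Fintype.card Y)
    (ρ σ : Matrix X X ℂ) (hρ : IsDensity ρ) (hσ : IsDensity σ)
    (ψρ ψσ : X × Y → ℂ)
    (hψρ : redX ψρ = ρ) (hψσ : redX ψσ = σ)
    (hψρu : ∑ p, ‖ψρ p‖ ^ 2 = 1) (hψσu : ∑ p, ‖ψσ p‖ ^ 2 = 1) :
    ∃ U : Matrix Y Y ℂ, Uᴴ * U = 1 ∧ U * Uᴴ = 1 ∧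
      ‖star ψσ ⬝ᵥ ((1 : Matrix X X ℂ) ⊗ₖ U).mulVec ψρ‖ ^ 2 =
        fidelity ρ σ := by

  classical
  obtain ⟨ι⟩ : Nonempty (X ↪ Y) := Function.Embedding.nonempty_of_card_le hdim
  set A : Matrix X Y ℂ := of fun x y => ψρ (x, y) with hAdef
  set B : Matrix X Y ℂ := of fun x y => ψσ (x, y) with hBdef
  have hA : A * Aᴴ = ρ := by
    rw [← hψρ]
    ext x x'
    simp only [mul_apply, conjTranspose_apply, hAdef, of_apply, redX, starRingEnd_apply]
  have hB : B * Bᴴ = σ := by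
    rw [← hψσ]
    ext x x'
    simp only [mul_apply, conjTranspose_apply, hBdef, of_apply, redX, starRingEnd_apply]
  obtain ⟨UA, VA, hUA, hVA, hdecA⟩ := exists_decomp ι A
  obtain ⟨UB, VB, hUB, hVB, hdecB⟩ := exists_decomp ι B
  rw [hA] at hdecA
  rw [hB] at hdecB
  have hUA' : UA * UAᴴ = 1 := mul_eq_one_comm.mp hUA
  have hUB' : UB * UBᴴ = 1 := mul_eq_one_comm.mp hUB
  have hVA' : VA * VAᴴ = 1 := mul_eq_one_comm.mp hVA
  have hVB' : VB * VBᴴ = 1 := mul_eq_one_comm.mp hVB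
  set T : Matrix X X ℂ := matSqrt σ * matSqrt ρ with hTdef
  have hTT : T * Tᴴ = matSqrt σ * ρ * matSqrt σ := by
    rw [hTdef, conjTranspose_mul, matSqrt_herm hρ.1, matSqrt_herm hσ.1]
    calc matSqrt σ * matSqrt ρ * (matSqrt ρ * matSqrt σ)
        = matSqrt σ * (matSqrt ρ * matSqrt ρ) * matSqrt σ := by
          simp only [Matrix.mul_assoc]
      _ = matSqrt σ * ρ * matSqrt σ := by rw [matSqrt_mul_self hρ.1]
  obtain ⟨UT, VT, hUT, hVT, hdecT⟩ := exists_decomp (Function.Embedding.refl X) T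
  have hErefl : embMat (Function.Embedding.refl X) = (1 : Matrix X X ℂ) := by
    ext x y
    simp [embMat, one_apply]
  set Q : Matrix X X ℂ := UT * VTᴴ with hQdef
  set S : Matrix X X ℂ := matSqrt (matSqrt σ * ρ * matSqrt σ) with hSdef
  have hdecT' : T = S * Q := by
    rw [hSdef, ← hTT]
    rw [hErefl, Matrix.mul_one] at hdecT
    exact hdecT
  have hQu : Qᴴ * Q = 1 := by
    rw [hQdef, conjTranspose_mul, conjTranspose_conjTranspose]
    calc VT * UTᴴ * (UT * VTᴴ) = VT * (UTᴴ * UT) * VTᴴ := by simp only [Matrix.mul_assoc]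
      _ = 1 := by rw [hUT, Matrix.mul_one, mul_eq_one_comm.mp hVT]
  have hQu' : Q * Qᴴ = 1 := mul_eq_one_comm.mp hQu
  set E : Matrix X Y ℂ := embMat ι with hEdef
  have hEE : E * Eᴴ = 1 := embMat_mul_conjTranspose ι
  set P : Matrix Y Y ℂ := Eᴴ * E with hPdef
  have hEP : E * (1 - P) = 0 := by
    rw [hPdef, Matrix.mul_sub, Matrix.mul_one, ← Matrix.mul_assoc, hEE, Matrix.one_mul, sub_self]
  have hPE : (1 - P) * Eᴴ = 0 := by
    rw [hPdef, Matrix.sub_mul, Matrix.one_mul, Matrix.mul_assoc, hEE, Matrix.mul_one, sub_self]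
  have hPidem : P * P = P := by
    rw [hPdef]
    calc Eᴴ * E * (Eᴴ * E) = Eᴴ * (E * Eᴴ) * E := by simp only [Matrix.mul_assoc]
      _ = Eᴴ * E := by rw [hEE, Matrix.mul_one]
  have hPherm : (1 - P)ᴴ = 1 - P := by
    rw [conjTranspose_sub, conjTranspose_one, hPdef, conjTranspose_mul,
      conjTranspose_conjTranspose]
  set M : Matrix X X ℂ := UAᴴ * Qᴴ * UB with hMdef
  have hMu : Mᴴ * M = 1 := by
    rw [hMdef]
    simp only [conjTranspose_mul, conjTranspose_conjTranspose, Matrix.mul_assoc]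
    rw [← Matrix.mul_assoc UA UAᴴ, hUA', Matrix.one_mul, ← Matrix.mul_assoc Q Qᴴ, hQu',
      Matrix.one_mul, hUB]
  set G : Matrix Y Y ℂ := Eᴴ * M * E + (1 - P) with hGdef
  have hGu : Gᴴ * G = 1 := by
    rw [hGdef, conjTranspose_add, conjTranspose_mul, conjTranspose_mul,
      conjTranspose_conjTranspose, hPherm]
    simp only [Matrix.add_mul, Matrix.mul_add, Matrix.mul_assoc]
    rw [← Matrix.mul_assoc E Eᴴ, hEE, Matrix.one_mul]
    rw [← Matrix.mul_assoc Mᴴ M, hMu, Matrix.one_mul]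
    rw [hEP, Matrix.mul_zero, Matrix.mul_zero]
    rw [← Matrix.mul_assoc (1 - P) Eᴴ, hPE, Matrix.zero_mul]
    have t4 : (1 - P) * (1 - P) = 1 - P := by
      rw [Matrix.sub_mul, Matrix.one_mul, Matrix.mul_sub, Matrix.mul_one, hPidem]
      abel
    rw [t4, hPdef]
    abel
  set V₀ : Matrix Y Y ℂ := VA * G * VBᴴ with hV₀def
  have hV₀u : V₀ᴴ * V₀ = 1 := by
    rw [hV₀def]
    simp only [conjTranspose_mul, conjTranspose_conjTranspose, Matrix.mul_assoc]
    rw [← Matrix.mul_assoc VAᴴ VA, hVA, Matrix.one_mul, ← Matrix.mul_assoc Gᴴ G, hGu,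
      Matrix.one_mul, hVB']
  have hV₀u' : V₀ * V₀ᴴ = 1 := mul_eq_one_comm.mp hV₀u
  refine ⟨V₀ᵀ, ?_, ?_, ?_⟩
  · rw [conjT_transpose, ← Matrix.transpose_mul, hV₀u', Matrix.transpose_one]
  · rw [conjT_transpose, ← Matrix.transpose_mul, hV₀u, Matrix.transpose_one]
  · rw [dot_kron]
    rw [show (of fun x y => ψσ (x, y)) = B from rfl, show (of fun x y => ψρ (x, y)) = A from rfl,
      Matrix.transpose_transpose]
    have hGE : G * Eᴴ = Eᴴ * M := by
      rw [hGdef, Matrix.add_mul, hPE, add_zero, Matrix.mul_assoc (Eᴴ * M) E Eᴴ, hEE,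
        Matrix.mul_one]
    have hEGE : E * (G * Eᴴ) = M := by
      rw [hGE, ← Matrix.mul_assoc, hEE, Matrix.one_mul]
    have hWAV : UA * E * VAᴴ * V₀ * (UB * E * VBᴴ)ᴴ = Qᴴ := by
      rw [hV₀def]
      simp only [conjTranspose_mul, conjTranspose_conjTranspose, Matrix.mul_assoc]
      rw [← Matrix.mul_assoc VAᴴ VA, hVA, Matrix.one_mul,
        ← Matrix.mul_assoc VBᴴ VB, hVB, Matrix.one_mul]
      rw [← Matrix.mul_assoc G Eᴴ UBᴴ, ← Matrix.mul_assoc E (G * Eᴴ) UBᴴ, hEGE]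
      rw [hMdef]
      simp only [Matrix.mul_assoc]
      rw [← Matrix.mul_assoc UA UAᴴ, hUA', Matrix.one_mul, hUB', Matrix.mul_one]
    have htr : trace (Bᴴ * A * V₀) = trace S := by
      rw [hdecA, hdecB, conjTranspose_mul, matSqrt_herm hσ.1]
      calc trace ((UB * E * VBᴴ)ᴴ * matSqrt σ * (matSqrt ρ * (UA * E * VAᴴ)) * V₀)
          = trace ((UB * E * VBᴴ)ᴴ * (matSqrt σ * matSqrt ρ * (UA * E * VAᴴ * V₀))) := by
            simp only [Matrix.mul_assoc]
        _ = trace (matSqrt σ * matSqrt ρ * (UA * E * VAᴴ * V₀) * (UB * E * VBᴴ)ᴴ) :=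
            trace_mul_comm _ _
        _ = trace (T * (UA * E * VAᴴ * V₀ * (UB * E * VBᴴ)ᴴ)) := by
            rw [hTdef]
            simp only [Matrix.mul_assoc]
        _ = trace (T * Qᴴ) := by rw [hWAV]
        _ = trace S := by
            rw [hdecT', Matrix.mul_assoc, hQu', Matrix.mul_one]
    rw [htr]
    have hSpsd : S.PosSemidef := by
      rw [hSdef]
      apply matSqrt_psd
      have := hρ.1.mul_mul_conjTranspose_same (matSqrt σ)
      rwa [matSqrt_herm hσ.1] at this
    have hre : trace S = ((trace S).re : ℂ) := by
      have h2 : (starRingEnd ℂ) (trace S) = trace S :=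
        calc (starRingEnd ℂ) (trace S) = star (trace S) := rfl
          _ = trace Sᴴ := (Matrix.trace_conjTranspose S).symm
          _ = trace S := by rw [hSpsd.1]
      exact (Complex.conj_eq_iff_re.mp h2).symm
    rw [hre, Complex.norm_real, Real.norm_eq_abs, sq_abs]
    unfold fidelity
    rw [hSdef]
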